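/- Let a_2 = 1 and a_q = a_{q-1} + (1/4)·∑_{ℓ=2}^{q-2} a_ℓ·a_{q-ℓ} for q ≥ 3. Then a_q = 2^{2-q}·C_{q-1} for all q ≥ 2, where C_n = binomial(2n,n)/(n+1) is the n-th Catalan number. -/

import Mathlib

open Finset

private lemma cat_sum (n : ℕ) :
    catalan (n+2) =
      (∑ j ∈ Finset.range n, catalan (j+1) * catalan (n - j))
        + catalan (n+1) + catalan (n+1) := by
  have h := catalan_succ (n+1)
  rw [Fin.sum_univ_eq_sum_range (fun i => catalan i * catalan (n + 1 - i)) (n+2)] at h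
  rw [Finset.sum_range_succ, Finset.sum_range_succ'] at h
  simp only [Nat.add_sub_cancel, catalan_zero, mul_one, one_mul, Nat.sub_self,
    Nat.sub_zero] at h
  rw [h]
  congr 2
  apply Finset.sum_congr rfl
  intro j hj
  congr 2
  omega

private noncomputable def f (q : ℕ) : ℚ := (2:ℚ) ^ ((2:ℤ) - (q:ℤ)) * catalan (q-1)

private lemma f_rec (n : ℕ) :
    f (n+3) = f (n+2) + (1/4) * ∑ ℓ ∈ Finset.Icc 2 (n+1), f ℓ * f (n+3-ℓ) := by
  have hsum : ∑ ℓ ∈ Finset.Icc 2 (n+1), f ℓ * f (n+3-ℓ)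
      = ∑ j ∈ Finset.range n, f (j+2) * f (n+1-j) := by
    rw [show Finset.Icc 2 (n+1) = Finset.Ico 2 (n+2) by rfl, Finset.sum_Ico_eq_sum_range]
    apply Finset.sum_congr (by congr 1)
    intro j hj
    rw [show 2 + j = j + 2 from by omega, show n + 3 - (j + 2) = n + 1 - j from by omega]
  rw [hsum]
  have hterm : ∀ j ∈ Finset.range n, f (j+2) * f (n+1-j)
      = (2:ℚ) ^ ((1:ℤ) - (n:ℤ)) * (catalan (j+1) * catalan (n-j)) := by
    intro j hj
    simp only [Finset.mem_range] at hj
    unfold f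
    have h1 : (j + 2 : ℕ) - 1 = j + 1 := by omega
    have h2 : (n + 1 - j : ℕ) - 1 = n - j := by omega
    have h3 : ((n + 1 - j : ℕ) : ℤ) = (n : ℤ) + 1 - j := by omega
    rw [h1, h2, h3]
    push_cast
    rw [show (2:ℤ) - ((j:ℤ)+2) = -j by ring, show (2:ℤ) - ((n:ℤ)+1-j) = j + (1 - n) by ring,
      zpow_add₀ (by norm_num : (2:ℚ) ≠ 0), zpow_neg]
    have h2j : (2:ℚ) ^ (j:ℤ) ≠ 0 := zpow_ne_zero _ (by norm_num)
    field_simp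
  rw [Finset.sum_congr rfl hterm, ← Finset.mul_sum]
  have hcat := cat_sum n
  have hcatQ : (∑ j ∈ Finset.range n, (catalan (j+1) : ℚ) * catalan (n-j))
      = (catalan (n+2) : ℚ) - 2 * catalan (n+1) := by
    have : ((∑ j ∈ Finset.range n, catalan (j+1) * catalan (n-j) : ℕ) : ℚ)
        = ((catalan (n+2) : ℕ) : ℚ) - 2 * catalan (n+1) := by
      rw [hcat]; push_cast; ring
    rw [← this]; push_cast; rfl
  rw [show ∑ j ∈ Finset.range n, ((catalan (j+1) : ℚ) * catalan (n-j))
      = (catalan (n+2) : ℚ) - 2 * catalan (n+1) from hcatQ]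
  unfold f
  have h4 : (n + 3 : ℕ) - 1 = n + 2 := by omega
  have h5 : (n + 2 : ℕ) - 1 = n + 1 := by omega
  rw [h4, h5]
  push_cast
  rw [show (2:ℤ) - ((n:ℤ)+3) = (1 - n) + (-2) by ring,
      show (2:ℤ) - ((n:ℤ)+2) = (1 - n) + (-1) by ring,
      zpow_add₀ (by norm_num : (2:ℚ) ≠ 0), zpow_add₀ (by norm_num : (2:ℚ) ≠ 0)]
  norm_num
  ring

private lemma catalan_cast (m : ℕ) :
    (catalan m : ℚ) = (Nat.choose (2 * m) m : ℚ) / ((m : ℚ) + 1) := by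
  have h := succ_mul_catalan_eq_centralBinom m
  have h2 : ((m + 1 : ℕ) : ℚ) * catalan m = (Nat.choose (2*m) m : ℚ) := by
    rw [← Nat.centralBinom_eq_two_mul_choose, ← h]; push_cast; ring
  have hm : ((m : ℚ) + 1) ≠ 0 := by positivity
  field_simp
  push_cast at h2
  linarith [h2]

theorem a_seq_eq_catalan (a : ℕ → ℚ)
    (ha2 : a 2 = 1)
    (harec : ∀ q : ℕ, 3 ≤ q →
      a q = a (q - 1) + (1 / 4) * ∑ ℓ ∈ Finset.Icc 2 (q - 2), a ℓ * a (q - ℓ)) :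
    ∀ q : ℕ, 2 ≤ q →
      a q = (2 : ℚ) ^ ((2 : ℤ) - (q : ℤ)) *
        ((Nat.choose (2 * (q - 1)) (q - 1) : ℚ) / ((q - 1 : ℕ) + 1)) := by
  have key : ∀ q : ℕ, 2 ≤ q → a q = f q := by
    intro q
    induction q using Nat.strong_induction_on with
    | _ q ih =>
      intro hq
      rcases Nat.lt_or_ge q 3 with h3 | h3
      · have : q = 2 := by omega
        subst this
        unfold f
        simp [ha2, catalan_one]
      · obtain ⟨n, rfl⟩ : ∃ n, q = n + 3 := ⟨q - 3, by omega⟩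
        rw [harec (n+3) (by omega)]
        rw [show (n+3) - 1 = n + 2 by omega, show (n+3) - 2 = n + 1 by omega]
        rw [ih (n+2) (by omega) (by omega)]
        have hsum : ∑ ℓ ∈ Finset.Icc 2 (n+1), a ℓ * a (n+3-ℓ)
            = ∑ ℓ ∈ Finset.Icc 2 (n+1), f ℓ * f (n+3-ℓ) := by
          apply Finset.sum_congr rfl
          intro ℓ hℓ
          simp only [Finset.mem_Icc] at hℓ
          rw [ih ℓ (by omega) hℓ.1, ih (n+3-ℓ) (by omega) (by omega)]
        rw [hsum, ← f_rec]
  intro q hq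
  rw [key q hq]
  unfold f
  rw [catalan_cast (q-1)]
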